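/- Let R = M[d] be the skew polynomial ring over M = ℂ[Q,R] with relation df - fd = D(f) for f ∈ M, where D is the Serre derivation. If N is a graded R-module whose underlying M-module is finitely generated with homogeneous components of bounded dimension, then Ann_M(N) is a nonzero graded d-ideal of M, and hence contains 𝔭^r = (Δ^r) for some r ≥ 0. -/

import Mathlib

open MvPolynomial

set_option synthInstance.maxHeartbeats 1000000
set_option maxHeartbeats 4000000

noncomputable section

/-- The ring of modular forms, modeled as a weighted polynomial ring `ℂ[Q,R]`,
`Q` of weight 4, `R` of weight 6. -/
abbrev MM := MvPolynomial (Fin 2) ℂ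

def Qg : MM := X 0
def Rg : MM := X 1

/-- The weights: `deg Q = 4`, `deg R = 6`. -/
def wt : Fin 2 → ℕ := ![4, 6]

/-- The Serre derivation, determined by `D(Q) = -(1/3) R` and `D(R) = -(1/2) Q²`. -/
def Dser : Derivation ℂ MM MM :=
  mkDerivation ℂ ![(-(1/3 : ℂ)) • Rg, (-(1/2 : ℂ)) • Qg ^ 2]

/-- `Δ = (Q³ - R²)/1728`. -/
def Δg : MM := (1/1728 : ℂ) • (Qg ^ 3 - Rg ^ 2)

/-- An ideal is graded (w.r.t. the weighted grading) if it is spanned by its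
weighted-homogeneous elements. -/
def IsGradedIdeal (I : Ideal MM) : Prop :=
  I = Ideal.span {x : MM | x ∈ I ∧ ∃ n : ℕ, x ∈ weightedHomogeneousSubmodule ℂ wt n}

/-! ### Auxiliary lemmas -/

lemma weight_eval (d : Fin 2 →₀ ℕ) : (Finsupp.weight wt) d = d 0 * 4 + d 1 * 6 := by
  rw [Finsupp.weight_apply, Finsupp.sum_fintype]
  · simp [Fin.sum_univ_two, wt, mul_comm]
  · intro i; simp

lemma single_add_tsub {i : Fin 2} {d : Fin 2 →₀ ℕ} (hd : d i ≠ 0) :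
    Finsupp.single i 1 + (d - Finsupp.single i 1) = d := by
  ext j
  by_cases hj : j = i
  · subst hj
    simp only [Finsupp.add_apply, Finsupp.single_eq_same, Finsupp.tsub_apply]
    omega
  · simp [Finsupp.single_eq_of_ne' (Ne.symm hj)]

lemma X_mul_pderiv_monomial (i : Fin 2) (d : Fin 2 →₀ ℕ) (c : ℂ) :
    (X i : MM) * pderiv i (monomial d c) = monomial d (c * d i) := by
  rw [pderiv_monomial]
  by_cases hd : d i = 0
  · simp [hd]
  · rw [X, monomial_mul, one_mul, single_add_tsub hd]

lemma pderiv_isWeightedHomogeneous {f : MM} {k : ℕ} (i : Fin 2)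
    (hf : f.IsWeightedHomogeneous wt k) :
    (pderiv i f).IsWeightedHomogeneous wt (k - wt i) := by
  conv_lhs => rw [f.as_sum]
  rw [map_sum]
  apply IsWeightedHomogeneous.sum
  intro d hd
  rw [pderiv_monomial]
  by_cases hdi : d i = 0
  · simp only [hdi, Nat.cast_zero, mul_zero, map_zero]
    exact isWeightedHomogeneous_zero _ _ _
  · apply isWeightedHomogeneous_monomial
    have hw : (Finsupp.weight wt) d = k := hf (mem_support_iff.mp hd)
    rw [weight_eval] at hw ⊢
    simp only [Finsupp.tsub_apply]
    fin_cases i <;>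
      simp_all [Finsupp.single_apply, wt] <;> omega

lemma euler_monomial (d : Fin 2 →₀ ℕ) (c : ℂ) (k : ℕ) (hk : d 0 * 4 + d 1 * 6 = k) :
    4 * (Qg * pderiv 0 (monomial d c)) + 6 * (Rg * pderiv 1 (monomial d c))
      = (k : MM) * monomial d c := by
  rw [Qg, Rg, X_mul_pderiv_monomial 0 d c, X_mul_pderiv_monomial 1 d c,
    show ((4:MM)) = C (4:ℂ) from (map_ofNat C 4).symm,
    show ((6:MM)) = C (6:ℂ) from (map_ofNat C 6).symm,
    show ((k:MM)) = C (k:ℂ) from by rw [map_natCast C],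
    C_mul_monomial, C_mul_monomial, C_mul_monomial, ← map_add]
  congr 1
  subst hk
  push_cast
  ring

/-- Euler's identity for weighted-homogeneous polynomials. -/
lemma euler {f : MM} {k : ℕ} (hf : f.IsWeightedHomogeneous wt k) :
    4 * (Qg * pderiv 0 f) + 6 * (Rg * pderiv 1 f) = (k : MM) * f := by
  conv_lhs => rw [f.as_sum]
  conv_rhs => rw [f.as_sum]
  rw [map_sum (pderiv 0), map_sum (pderiv 1), Finset.mul_sum, Finset.mul_sum,
    Finset.mul_sum, Finset.mul_sum, Finset.mul_sum, ← Finset.sum_add_distrib]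
  apply Finset.sum_congr rfl
  intro d hd
  apply euler_monomial
  have hw : (Finsupp.weight wt) d = k := hf (mem_support_iff.mp hd)
  rw [weight_eval] at hw
  exact hw

lemma Dser_ext : Dser = (-(1/3:ℂ)) • (Rg • (pderiv 0 : Derivation ℂ MM MM))
    + (-(1/2:ℂ)) • ((Qg^2) • (pderiv 1 : Derivation ℂ MM MM)) := by
  apply derivation_ext
  intro i
  fin_cases i <;>
    simp [Dser, mkDerivation_X, Qg, Rg, pderiv_X]

/-- The Serre derivation in terms of partial derivatives (integral form). -/
lemma Dser0 (f : MM) :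
    6 * Dser f + 2 * (Rg * pderiv 0 f) + 3 * (Qg^2 * pderiv 1 f) = 0 := by
  have h : Dser f = (-(1/3:ℂ)) • (Rg * pderiv 0 f) + (-(1/2:ℂ)) • (Qg^2 * pderiv 1 f) := by
    rw [Dser_ext]
    simp [smul_eq_mul]
  rw [h, smul_eq_C_mul, smul_eq_C_mul,
    show ((6:MM)) = C (6:ℂ) from (map_ofNat C 6).symm,
    show ((2:MM)) = C (2:ℂ) from (map_ofNat C 2).symm,
    show ((3:MM)) = C (3:ℂ) from (map_ofNat C 3).symm]
  ring_nf
  rw [← C_mul, ← C_mul]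
  norm_num
  ring

lemma delta_C : (1728 : MM) * Δg = Qg ^ 3 - Rg ^ 2 := by
  rw [Δg, smul_eq_C_mul, ← mul_assoc, show ((1728:MM)) = C (1728:ℂ) from (map_ofNat C 1728).symm,
    ← C_mul]
  norm_num

/-- Key step: for a weighted-homogeneous element `f` of a `D`-stable ideal `I`,
the element `Δ·∂ᵢf` again lies in `I`. -/
lemma step (I : Ideal MM) (hD : ∀ f ∈ I, Dser f ∈ I) {f : MM} {k : ℕ} (hf : f ∈ I)
    (hhom : f.IsWeightedHomogeneous wt k) (i : Fin 2) : Δg * pderiv i f ∈ I := by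
  have hDf := hD f hf
  have he := euler hhom
  have hd0 := Dser0 f
  fin_cases i
  · show Δg * pderiv 0 f ∈ I
    have key : (6912:MM) * (Δg * pderiv 0 f) = (12 * Rg) * Dser f + ((k:MM) * Qg^2) * f := by
      linear_combination (Qg^2) * he + (-2*Rg) * hd0 + (4 * pderiv 0 f) * delta_C
    have hmem : (6912:MM) * (Δg * pderiv 0 f) ∈ I := by
      rw [key]; exact add_mem (I.mul_mem_left _ hDf) (I.mul_mem_left _ hf)
    have heq : Δg * pderiv 0 f = C ((6912:ℂ)⁻¹) * ((6912:MM) * (Δg * pderiv 0 f)) := by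
      rw [← mul_assoc, show ((6912:MM)) = C (6912:ℂ) from (map_ofNat C 6912).symm, ← C_mul]
      norm_num
    rw [heq]; exact I.mul_mem_left _ hmem
  · show Δg * pderiv 1 f ∈ I
    have key : (10368:MM) * (Δg * pderiv 1 f) = (-(12 * Qg)) * Dser f + (-((k:MM) * Rg)) * f := by
      linear_combination (-Rg) * he + (2*Qg) * hd0 + (6 * pderiv 1 f) * delta_C
    have hmem : (10368:MM) * (Δg * pderiv 1 f) ∈ I := by
      rw [key]; exact add_mem (I.mul_mem_left _ hDf) (I.mul_mem_left _ hf)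
    have heq : Δg * pderiv 1 f = C ((10368:ℂ)⁻¹) * ((10368:MM) * (Δg * pderiv 1 f)) := by
      rw [← mul_assoc, show ((10368:MM)) = C (10368:ℂ) from (map_ofNat C 10368).symm, ← C_mul]
      norm_num
    rw [heq]; exact I.mul_mem_left _ hmem

lemma delta_hom : (Δg : MM).IsWeightedHomogeneous wt 12 := by
  rw [← mem_weightedHomogeneousSubmodule]
  have hQ : (Qg:MM).IsWeightedHomogeneous wt 4 := isWeightedHomogeneous_X ℂ wt 0
  have hR : (Rg:MM).IsWeightedHomogeneous wt 6 := isWeightedHomogeneous_X ℂ wt 1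
  have hQ3 : ((Qg^3 : MM)).IsWeightedHomogeneous wt 12 := by
    have := (hQ.mul hQ).mul hQ
    rw [show Qg^3 = Qg*Qg*Qg by ring]
    exact this
  have hR2 : ((Rg^2 : MM)).IsWeightedHomogeneous wt 12 := by
    have := hR.mul hR
    rw [show Rg^2 = Rg*Rg by ring]
    exact this
  rw [Δg]
  exact Submodule.smul_mem _ _ (Submodule.sub_mem _ hQ3 hR2)

lemma delta_pow_hom (m : ℕ) : ((Δg ^ m : MM)).IsWeightedHomogeneous wt (12 * m) := by
  induction m with
  | zero => simpa using isWeightedHomogeneous_one ℂ wt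
  | succ n ih =>
      rw [pow_succ, Nat.mul_succ]
      exact ih.mul delta_hom

lemma delta_mul_pderiv_pow (i : Fin 2) (m : ℕ) :
    Δg * pderiv i (Δg ^ m) = ((m:MM) * pderiv i Δg) * Δg ^ m := by
  cases m with
  | zero => simp
  | succ n =>
      rw [pderiv_pow]
      push_cast
      ring_nf

/-- The central induction: any `D`-stable ideal containing a nonzero
weighted-homogeneous element (up to a power of `Δ`) contains a power of `Δ`. -/
lemma key_induction (I : Ideal MM) (hD : ∀ f ∈ I, Dser f ∈ I) :
    ∀ k : ℕ, ∀ (m : ℕ) (f : MM), f ≠ 0 → f.IsWeightedHomogeneous wt k →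
      Δg ^ m * f ∈ I → ∃ r : ℕ, Δg ^ r ∈ I := by
  intro k
  induction k using Nat.strong_induction_on with
  | _ k IH =>
    intro m f hf0 hhom hmem
    rcases Nat.eq_zero_or_pos k with hk | hk
    · -- f is a nonzero constant
      subst hk
      have hfC : f = C (coeff 0 f) := by
        ext d
        by_cases hd : d = 0
        · subst hd; simp
        · rw [coeff_C, if_neg (Ne.symm hd)]
          by_contra hc
          have hw := hhom hc
          rw [weight_eval] at hw
          have h01 : d 0 ≠ 0 ∨ d 1 ≠ 0 := by
            by_contra hall
            push_neg at hall
            refine hd (Finsupp.ext fun j => ?_)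
            fin_cases j
            · exact hall.1
            · exact hall.2
          rcases h01 with h | h <;> omega
      have hc0 : coeff 0 f ≠ 0 := by
        intro h; rw [h, map_zero] at hfC; exact hf0 hfC
      refine ⟨m, ?_⟩
      rw [hfC] at hmem
      set c := coeff 0 f with hc
      have heq : Δg ^ m = C c⁻¹ * (Δg ^ m * C c) := by
        rw [mul_comm (Δg ^ m) (C c), ← mul_assoc, ← C_mul, inv_mul_cancel₀ hc0, C_1, one_mul]
      rw [heq]
      exact I.mul_mem_left _ hmem
    · -- find a nonvanishing partial derivative
      have he := euler hhom
      have hex : pderiv 0 f ≠ 0 ∨ pderiv 1 f ≠ 0 := by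
        by_contra hall
        push_neg at hall
        rw [hall.1, hall.2] at he
        simp at he
        rcases he with h | h
        · omega
        · exact hf0 h
      obtain ⟨i, hgi⟩ : ∃ i : Fin 2, pderiv i f ≠ 0 := by
        rcases hex with h | h
        · exact ⟨0, h⟩
        · exact ⟨1, h⟩
      have hghom := pderiv_isWeightedHomogeneous i hhom
      have hwi : 0 < wt i := by fin_cases i <;> simp [wt]
      have hh : (Δg ^ m * f).IsWeightedHomogeneous wt (12 * m + k) := (delta_pow_hom m).mul hhom
      have hstep := step I hD hmem hh i
      have hmem' : Δg ^ (m + 1) * pderiv i f ∈ I := by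
        have hexp : Δg ^ (m+1) * pderiv i f
            = Δg * pderiv i (Δg ^ m * f) - ((m:MM) * pderiv i Δg) * (Δg ^ m * f) := by
          rw [pderiv_mul, mul_add, ← mul_assoc, delta_mul_pderiv_pow]
          ring
        rw [hexp]
        exact sub_mem hstep (I.mul_mem_left _ hmem)
      exact IH (k - wt i) (by omega) (m+1) (pderiv i f) hgi hghom hmem'

section Mod

variable {N : Type} [AddCommGroup N] [Module MM N] [Module ℂ N] [IsScalarTower ℂ MM N]
    (𝒩 : ℤ → Submodule ℂ N) [DirectSum.Decomposition 𝒩]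

omit [IsScalarTower ℂ MM N] in
/-- If `f • x = 0` for all `x`, then each weighted homogeneous component of `f`
also annihilates. -/
lemma component_annihilates
    (hcompat : ∀ (n : ℕ) (f : MM), f ∈ weightedHomogeneousSubmodule ℂ wt n →
      ∀ (k : ℤ) (x : N), x ∈ 𝒩 k → f • x ∈ 𝒩 (k + n))
    (f : MM) (hf : ∀ x : N, f • x = 0) (n : ℕ) (x : N) :
    weightedHomogeneousComponent wt n f • x = 0 := by
  classical
  have hhomog : ∀ (k : ℤ) (y : N), y ∈ 𝒩 k → weightedHomogeneousComponent wt n f • y = 0 := by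
    intro k y hy
    have hfin := weightedHomogeneousComponent_finsupp (w := wt) f
    set s : Finset ℕ := hfin.toFinset with hs
    have hsum : (∑ m ∈ s, weightedHomogeneousComponent wt m f) = f := by
      rw [← finsum_eq_sum _ hfin, sum_weightedHomogeneousComponent]
    by_cases hn : n ∈ s
    · have h0 : (0 : N) = ∑ m ∈ s, weightedHomogeneousComponent wt m f • y := by
        rw [← Finset.sum_smul, hsum, hf y]
      have hc : ∀ m : ℕ, weightedHomogeneousComponent wt m f • y ∈ 𝒩 (k + m) := fun m =>
        hcompat m _ (weightedHomogeneousComponent_mem wt f m) k y hy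
      have happ := congrArg (fun z => ((DirectSum.decompose 𝒩 z) (k + n) : N)) h0
      simp only [DirectSum.decompose_zero, DirectSum.zero_apply, ZeroMemClass.coe_zero] at happ
      rw [show (DirectSum.decompose 𝒩 (∑ m ∈ s, weightedHomogeneousComponent wt m f • y))
            = ∑ m ∈ s, DirectSum.decompose 𝒩 (weightedHomogeneousComponent wt m f • y) from
          map_sum (DirectSum.decomposeAddEquiv 𝒩) _ _] at happ
      rw [DFinsupp.finset_sum_apply] at happ
      rw [AddSubmonoidClass.coe_finset_sum] at happ
      rw [Finset.sum_eq_single n] at happ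
      · rw [DirectSum.decompose_of_mem_same 𝒩 (hc n)] at happ
        exact happ.symm
      · intro m hm hmn
        exact DirectSum.decompose_of_mem_ne 𝒩 (hc m) (by omega)
      · intro hns
        exact absurd hn hns
    · have : weightedHomogeneousComponent wt n f = 0 := by
        by_contra hne
        exact hn (hfin.mem_toFinset.mpr hne)
      rw [this, zero_smul]
  rw [← DirectSum.sum_support_decompose 𝒩 x, Finset.smul_sum]
  apply Finset.sum_eq_zero
  intro k hk
  exact hhomog k _ (((DirectSum.decompose 𝒩 x) k).2)

/-- For every `t`, the weight-`12t` monomials `Q^{3a} R^{2(t-a)}`, `a = 0..t`,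
are linearly independent homogeneous elements. -/
lemma exists_indep (t : ℕ) :
    ∃ μ : Fin (t+1) → MM, LinearIndependent ℂ μ ∧
      ∀ a, (μ a).IsWeightedHomogeneous wt (12 * t) := by
  classical
  set da : Fin (t+1) → (Fin 2 →₀ ℕ) :=
    fun a => Finsupp.single 0 (3 * (a:ℕ)) + Finsupp.single 1 (2 * (t - (a:ℕ))) with hda
  have hinj : Function.Injective da := by
    intro a b hab
    have h0 := congrArg (fun d => d 0) hab
    simp only [hda, Finsupp.add_apply, Finsupp.single_eq_same,
      Finsupp.single_eq_of_ne' (show (1:Fin 2) ≠ 0 by decide)] at h0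
    have := a.isLt; have := b.isLt
    exact Fin.ext (by omega)
  refine ⟨fun a => monomial (da a) 1, ?_, ?_⟩
  · have h := (basisMonomials (Fin 2) ℂ).linearIndependent.comp da hinj
    have : (fun a => monomial (da a) (1:ℂ)) = (basisMonomials (Fin 2) ℂ) ∘ da := by
      funext a; rw [Function.comp_apply, coe_basisMonomials]
    rw [this]
    exact h
  · intro a
    apply isWeightedHomogeneous_monomial
    rw [weight_eval]
    simp only [hda, Finsupp.add_apply, Finsupp.single_eq_same,
      Finsupp.single_eq_of_ne' (show (1:Fin 2) ≠ 0 by decide),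
      Finsupp.single_eq_of_ne' (show (0:Fin 2) ≠ 1 by decide)]
    have := a.isLt
    omega

/-- The annihilator of a finitely generated graded module with homogeneous
components of bounded dimension is nonzero. -/
lemma ann_ne_bot
    (hcompat : ∀ (n : ℕ) (f : MM), f ∈ weightedHomogeneousSubmodule ℂ wt n →
      ∀ (k : ℤ) (x : N), x ∈ 𝒩 k → f • x ∈ 𝒩 (k + n))
    [Module.Finite MM N]
    (hfd : ∀ k : ℤ, FiniteDimensional ℂ (𝒩 k))
    (B : ℕ) (hbd : ∀ k : ℤ, Module.finrank ℂ (𝒩 k) ≤ B)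
    (I : Ideal MM) (hI : ∀ f : MM, f ∈ I ↔ ∀ x : N, f • x = 0) :
    I ≠ ⊥ := by
  classical
  intro hbot
  obtain ⟨nn, x, hx⟩ := Module.Finite.exists_fin (R := MM) (M := N)
  set xc : Fin nn → ℤ → N := fun j k => ((DirectSum.decompose 𝒩 (x j)) k : N) with hxc
  set T : Finset ℤ := Finset.univ.biUnion
    (fun j : Fin nn => (DirectSum.decompose 𝒩 (x j)).support) with hT
  set t : ℕ := (Fintype.card (Fin nn × T)) * B + 1 with ht
  set n : ℕ := 12 * t with hn
  haveI : ∀ p : Fin nn × T, FiniteDimensional ℂ (𝒩 (((p.2 : ℤ)) + n)) := fun p => hfd _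
  set Ψ : weightedHomogeneousSubmodule ℂ wt n →ₗ[ℂ] (∀ p : Fin nn × T, 𝒩 ((p.2 : ℤ) + n)) :=
    { toFun := fun f p => ⟨(f : MM) • xc p.1 p.2,
        hcompat n f f.2 p.2 _ (SetLike.coe_mem _)⟩
      map_add' := by
        intro f g; funext p
        ext
        exact add_smul (f:MM) (g:MM) _
      map_smul' := by
        intro c f; funext p
        ext
        exact smul_assoc c (f:MM) _ } with hΨ
  have hinj : Function.Injective Ψ := by
    intro f g hfg
    have hann : ∀ j k, ((f:MM) - (g:MM)) • xc j k = 0 := by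
      intro j k
      by_cases hk : k ∈ (DirectSum.decompose 𝒩 (x j)).support
      · have hkT : k ∈ T := Finset.mem_biUnion.mpr ⟨j, Finset.mem_univ _, hk⟩
        have := congrFun hfg (j, ⟨k, hkT⟩)
        have hval : (f:MM) • xc j k = (g:MM) • xc j k := congrArg Subtype.val this
        rw [sub_smul, hval, sub_self]
      · have : xc j k = 0 := by
          simp only [hxc]
          rw [DFinsupp.notMem_support_iff.mp hk]
          rfl
        rw [this, smul_zero]
    have hmem : ((f:MM) - (g:MM)) ∈ I := by
      rw [hI]
      intro y
      have hy : y ∈ Submodule.span MM (Set.range x) := hx ▸ Submodule.mem_top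
      induction hy using Submodule.span_induction with
      | mem z hz =>
          obtain ⟨j, rfl⟩ := hz
          have hxj : x j = ∑ k ∈ (DirectSum.decompose 𝒩 (x j)).support, xc j k :=
            (DirectSum.sum_support_decompose 𝒩 (x j)).symm
          rw [hxj, Finset.smul_sum]
          exact Finset.sum_eq_zero fun k _ => hann j k
      | zero => rw [smul_zero]
      | add a b ha hb iha ihb => rw [smul_add, iha, ihb, add_zero]
      | smul c a ha iha => rw [smul_comm, iha, smul_zero]
    rw [hbot] at hmem
    have := Submodule.mem_bot (R := MM) |>.mp hmem
    exact Subtype.ext (sub_eq_zero.mp this)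
  obtain ⟨μ, hμind, hμhom⟩ := exists_indep t
  set v : Fin (t+1) → weightedHomogeneousSubmodule ℂ wt n := fun a => ⟨μ a, hμhom a⟩ with hv
  have hvind : LinearIndependent ℂ v := by
    apply LinearIndependent.of_comp (weightedHomogeneousSubmodule ℂ wt n).subtype
    exact hμind
  have hind : LinearIndependent ℂ (Ψ ∘ v) := hvind.map' Ψ (LinearMap.ker_eq_bot.mpr hinj)
  have hcard := hind.fintype_card_le_finrank
  rw [Fintype.card_fin] at hcard
  have hrank : Module.finrank ℂ (∀ p : Fin nn × T, 𝒩 ((p.2 : ℤ) + n))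
      = ∑ p : Fin nn × T, Module.finrank ℂ (𝒩 ((p.2 : ℤ) + n)) :=
    Module.finrank_pi_fintype ℂ
  have hsum : ∑ p : Fin nn × T, Module.finrank ℂ (𝒩 ((p.2 : ℤ) + n))
      ≤ (Fintype.card (Fin nn × T)) * B := by
    rw [← Finset.card_univ, ← smul_eq_mul]
    exact Finset.sum_le_card_nsmul _ _ _ fun p _ => hbd _
  omega

end Mod

/-- Let `N` be a graded module over the skew polynomial ring `R = M[d]`
(`d·f = f·d + D(f)`, `D` the Serre derivation), i.e. a graded `M`-module with a
degree-2 operator `d` satisfying the skew Leibniz rule.  If the underlying `M`-module is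
finitely generated with homogeneous components of bounded dimension, then the annihilator
`Ann_M(N)` is a nonzero graded `d`-ideal of `M`, and hence contains `(Δ)^r` for some
`r ≥ 0`. -/
theorem annihilator_of_bounded_R_module_contains_power_of_delta
    {N : Type} [AddCommGroup N] [Module MM N] [Module ℂ N] [IsScalarTower ℂ MM N]
    (𝒩 : ℤ → Submodule ℂ N) [DirectSum.Decomposition 𝒩]
    (hcompat : ∀ (n : ℕ) (f : MM), f ∈ weightedHomogeneousSubmodule ℂ wt n →
      ∀ (k : ℤ) (x : N), x ∈ 𝒩 k → f • x ∈ 𝒩 (k + n))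
    (d : N →ₗ[ℂ] N)
    (hskew : ∀ (f : MM) (x : N), d (f • x) = f • d x + (Dser f) • x)
    (hdgr : ∀ (k : ℤ) (x : N), x ∈ 𝒩 k → d x ∈ 𝒩 (k + 2))
    [Module.Finite MM N]
    (hfd : ∀ k : ℤ, FiniteDimensional ℂ (𝒩 k))
    (B : ℕ) (hbd : ∀ k : ℤ, Module.finrank ℂ (𝒩 k) ≤ B)
    (I : Ideal MM) (hI : ∀ f : MM, f ∈ I ↔ ∀ x : N, f • x = 0) :
    I ≠ ⊥ ∧ IsGradedIdeal I ∧ (∀ f ∈ I, Dser f ∈ I) ∧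
    ∃ r : ℕ, (Ideal.span {Δg}) ^ r ≤ I := by
  -- D-stability
  have hD : ∀ f ∈ I, Dser f ∈ I := by
    intro f hf
    rw [hI]
    intro x
    have h := hskew f x
    rw [(hI f).mp hf x, map_zero, (hI f).mp hf (d x)] at h
    simpa using h.symm
  -- nonzero
  have hne : I ≠ ⊥ := ann_ne_bot 𝒩 hcompat hfd B hbd I hI
  -- components of elements of I lie in I
  have hcomp : ∀ f ∈ I, ∀ n : ℕ, weightedHomogeneousComponent wt n f ∈ I := by
    intro f hf n
    rw [hI]
    exact component_annihilates 𝒩 hcompat f ((hI f).mp hf) n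
  -- gradedness
  have hgr : IsGradedIdeal I := by
    unfold IsGradedIdeal
    apply le_antisymm
    · intro f hf
      classical
      have hfin := weightedHomogeneousComponent_finsupp (w := wt) f
      have hsum : (∑ m ∈ hfin.toFinset, weightedHomogeneousComponent wt m f) = f := by
        rw [← finsum_eq_sum _ hfin, sum_weightedHomogeneousComponent]
      rw [← hsum]
      apply Ideal.sum_mem
      intro m _
      apply Ideal.subset_span
      exact ⟨hcomp f hf m, m, weightedHomogeneousComponent_mem wt f m⟩
    · rw [Ideal.span_le]
      intro x hx
      exact hx.1
  refine ⟨hne, hgr, hD, ?_⟩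
  -- a nonzero homogeneous element of I
  obtain ⟨f, hfI, hf0⟩ := Submodule.exists_mem_ne_zero_of_ne_bot hne
  have hex : ∃ m : ℕ, weightedHomogeneousComponent wt m f ≠ 0 := by
    by_contra hall
    push_neg at hall
    apply hf0
    rw [← sum_weightedHomogeneousComponent wt f]
    exact finsum_eq_zero_of_forall_eq_zero hall
  obtain ⟨m, hm⟩ := hex
  have hghom : (weightedHomogeneousComponent wt m f).IsWeightedHomogeneous wt m :=
    weightedHomogeneousComponent_isWeightedHomogeneous m f
  have hmem : Δg ^ 0 * weightedHomogeneousComponent wt m f ∈ I := by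
    rw [pow_zero, one_mul]
    exact hcomp f hfI m
  obtain ⟨r, hr⟩ := key_induction I hD m 0 _ hm hghom hmem
  refine ⟨r, ?_⟩
  rw [Ideal.span_singleton_pow, Ideal.span_le]
  intro z hz
  rw [Set.mem_singleton_iff] at hz
  subst hz
  exact hr

end
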